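/- For natural numbers m, n ≥ 1, the graph D_{m,n} has domination number m + 1, eternal domination number m + 2, and autonomous domination number m + n + 1. -/

import Mathlib

open SimpleGraph

variable {V : Type*} [DecidableEq V]

/-- `S` is a dominating set of `G`. -/
def Dominates (G : SimpleGraph V) (S : Finset V) : Prop :=
  ∀ v : V, v ∈ S ∨ ∃ u ∈ S, G.Adj u v

/-- Dominating sets `S` and `S'` are adjacent: they differ by moving one
guard along an edge of `G`. -/
def AdjacentSets (G : SimpleGraph V) (S S' : Finset V) : Prop :=
  ∃ v v', v ∈ S ∧ v' ∉ S ∧ G.Adj v v' ∧ S' = insert v' (S.erase v)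

/-- `S` is a secure dominating set. -/
def SecureDominating (G : SimpleGraph V) (S : Finset V) : Prop :=
  Dominates G S ∧ ∀ v ∉ S, ∃ S', Dominates G S' ∧ AdjacentSets G S S' ∧ v ∈ S'

/-- An autonomously dominating family. -/
def AutFamily (G : SimpleGraph V) (F : Set (Finset V)) : Prop :=
  (∀ S ∈ F, Dominates G S) ∧
  (∀ S ∈ F, ∀ v ∉ S, ∃ S' ∈ F, AdjacentSets G S S' ∧ v ∈ S') ∧
  (∀ S ∈ F, ∀ S', Dominates G S' → AdjacentSets G S S' → S' ∈ F)

/-- An autonomously dominating set. -/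
def AutDomSet (G : SimpleGraph V) (S : Finset V) : Prop :=
  ∃ F, AutFamily G F ∧ S ∈ F

/-- The autonomous domination number. -/
noncomputable def autDomNum (G : SimpleGraph V) : ℕ :=
  sInf {k | ∃ S : Finset V, AutDomSet G S ∧ S.card = k}

/-- An eternally dominating family (no closure condition). -/
def EternalFamily (G : SimpleGraph V) (F : Set (Finset V)) : Prop :=
  (∀ S ∈ F, Dominates G S) ∧
  (∀ S ∈ F, ∀ v ∉ S, ∃ S' ∈ F, AdjacentSets G S S' ∧ v ∈ S')

/-- The eternal domination number. -/
noncomputable def eternalDomNum (G : SimpleGraph V) : ℕ :=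
  sInf {k | ∃ (F : Set (Finset V)) (S : Finset V),
    EternalFamily G F ∧ S ∈ F ∧ S.card = k}

/-- The domination number. -/
noncomputable def domNum (G : SimpleGraph V) : ℕ :=
  sInf {k | ∃ S : Finset V, Dominates G S ∧ S.card = k}

/-- The graph `D_{m,n}`: vertices `a_1, a_2` (`Sum.inl i`, with `a_2 = Sum.inl 1`),
`b_i^1 = Sum.inr (Sum.inl (i, 0))`, `b_i^2 = Sum.inr (Sum.inl (i, 1))` for `1 ≤ i ≤ m`,
and `c_1, …, c_n` (`Sum.inr (Sum.inr _)`).  The set `{a_1, a_2, b_1^1, …, b_m^1}`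
induces a complete subgraph, `b_i^1 ~ b_i^2`, `{a_2, c_1, …, c_n}` induces a complete
subgraph, and there are no other edges. -/
def graphD (m n : ℕ) : SimpleGraph (Fin 2 ⊕ (Fin m × Fin 2) ⊕ Fin n) :=
  SimpleGraph.fromRel (fun x y => match x, y with
    | .inl _, .inl _ => True
    | .inl _, .inr (.inl (_, k)) => k = 0
    | .inr (.inl (_, k)), .inl _ => k = 0
    | .inl i, .inr (.inr _) => i = 1
    | .inr (.inl (i, k)), .inr (.inl (j, l)) => (k = 0 ∧ l = 0) ∨ i = j
    | .inr (.inr _), .inr (.inr _) => True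
    | _, _ => False)

namespace GD
variable {m n : ℕ}

abbrev va (i : Fin 2) : Fin 2 ⊕ (Fin m × Fin 2) ⊕ Fin n := .inl i
abbrev vb (i : Fin m) (k : Fin 2) : Fin 2 ⊕ (Fin m × Fin 2) ⊕ Fin n := .inr (.inl (i,k))
abbrev vc (j : Fin n) : Fin 2 ⊕ (Fin m × Fin 2) ⊕ Fin n := .inr (.inr j)

@[simp] lemma adj_aa {i j : Fin 2} : (graphD m n).Adj (va i) (va j) ↔ i ≠ j := by
  simp [graphD, va, SimpleGraph.fromRel_adj]
@[simp] lemma adj_ab {i : Fin 2} {j : Fin m} {k : Fin 2} :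
    (graphD m n).Adj (va i) (vb j k) ↔ k = 0 := by
  simp [graphD, va, vb, SimpleGraph.fromRel_adj]
@[simp] lemma adj_ba {i : Fin 2} {j : Fin m} {k : Fin 2} :
    (graphD m n).Adj (vb j k) (va i) ↔ k = 0 := by
  simp [graphD, va, vb, SimpleGraph.fromRel_adj]
@[simp] lemma adj_ac {i : Fin 2} {j : Fin n} :
    (graphD m n).Adj (va i) (vc j) ↔ i = 1 := by
  simp [graphD, va, vc, SimpleGraph.fromRel_adj]
@[simp] lemma adj_ca {i : Fin 2} {j : Fin n} :
    (graphD m n).Adj (vc j) (va i) ↔ i = 1 := by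
  simp [graphD, va, vc, SimpleGraph.fromRel_adj]
@[simp] lemma adj_bb {i j : Fin m} {k l : Fin 2} :
    (graphD m n).Adj (vb i k) (vb j l) ↔ ¬(i = j ∧ k = l) ∧ ((k = 0 ∧ l = 0) ∨ i = j) := by
  simp [graphD, vb, SimpleGraph.fromRel_adj]; tauto
@[simp] lemma adj_bc {i : Fin m} {k : Fin 2} {j : Fin n} :
    ¬ (graphD m n).Adj (vb i k) (vc j) := by
  simp [graphD, vb, vc, SimpleGraph.fromRel_adj]
@[simp] lemma adj_cb {i : Fin m} {k : Fin 2} {j : Fin n} :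
    ¬ (graphD m n).Adj (vc j) (vb i k) := by
  simp [graphD, vb, vc, SimpleGraph.fromRel_adj]
@[simp] lemma adj_cc {i j : Fin n} : (graphD m n).Adj (vc i) (vc j) ↔ i ≠ j := by
  simp [graphD, vc, SimpleGraph.fromRel_adj]

/-- whether a vertex is a b-vertex -/
def isB : (Fin 2 ⊕ (Fin m × Fin 2) ⊕ Fin n) → Bool
  | .inr (.inl _) => true
  | _ => false

def pidx : (Fin 2 ⊕ (Fin m × Fin 2) ⊕ Fin n) → Option (Fin m)
  | .inr (.inl (i, _)) => some i
  | _ => none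

variable {S : Finset (Fin 2 ⊕ (Fin m × Fin 2) ⊕ Fin n)}

/-- every pair has a guard -/
lemma fin2 (l : Fin 2) : l = 0 ∨ l = 1 := by fin_cases l <;> simp

lemma pair_mem (hS : Dominates (graphD m n) S) (i : Fin m) :
    vb i 0 ∈ S ∨ vb i 1 ∈ S := by
  rcases hS (vb i 1) with h | ⟨u, hu, hadj⟩
  · exact Or.inr h
  · rcases u with x | ⟨j, l⟩ | j
    · simp at hadj
    · rw [adj_bb] at hadj
      obtain ⟨h1, h2⟩ := hadj
      have hji : j = i := by
        rcases h2 with ⟨_, h⟩ | h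
        · exact absurd h (by decide)
        · exact h
      subst hji
      fin_cases l
      · exact Or.inl hu
      · exact absurd (by simp : j = j ∧ (1:Fin 2) = 1) (by simpa using h1)
    · simp at hadj


/-- a1's domination -/
lemma a1_mem (hS : Dominates (graphD m n) S) :
    va 0 ∈ S ∨ va 1 ∈ S ∨ ∃ j, vb j 0 ∈ S := by
  rcases hS (va 0) with h | ⟨u, hu, hadj⟩
  · exact Or.inl h
  · rcases u with x | ⟨j, l⟩ | j
    · right; left
      have : x ≠ 0 := by simpa using hadj
      rcases fin2 x with rfl | rfl
      · simp at this
      · exact hu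
    · rw [adj_ba] at hadj
      subst hadj
      exact Or.inr (Or.inr ⟨j, hu⟩)
    · rw [adj_ca] at hadj
      simp at hadj

/-- domination of c vertices -/
lemma c_mem (hS : Dominates (graphD m n) S) (j : Fin n) :
    va 1 ∈ S ∨ ∃ l, vc l ∈ S := by
  rcases hS (vc j) with h | ⟨u, hu, hadj⟩
  · exact Or.inr ⟨j, h⟩
  · rcases u with x | ⟨i, l⟩ | l
    · rw [adj_ac] at hadj; subst hadj; exact Or.inl hu
    · exact absurd hadj (by simp)
    · exact Or.inr ⟨l, hu⟩

/-- the key counting lemma: pairs are covered, plus extra non-pair elements -/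
lemma card_ge (hpair : ∀ i : Fin m, vb i 0 ∈ S ∨ vb i 1 ∈ S)
    (T : Finset (Fin 2 ⊕ (Fin m × Fin 2) ⊕ Fin n)) (hT : T ⊆ S)
    (hTnp : ∀ x ∈ T, isB x = false) :
    m + T.card ≤ S.card := by
  classical
  have hsplit := S.card_filter_add_card_filter_not (p := fun x => isB x = true)
  have h1 : m ≤ (S.filter (fun x => isB x = true)).card := by
    have hsurj : Set.SurjOn (pidx (m:=m) (n:=n)) (↑(S.filter (fun x => isB x = true)))
        (↑(Finset.univ.image (some : Fin m → Option (Fin m)))) := by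
      intro y hy
      simp only [Finset.coe_image, Set.mem_image, Finset.mem_coe, Finset.coe_univ,
        Set.image_univ, Set.mem_range] at hy
      obtain ⟨i, rfl⟩ := hy
      rcases hpair i with h | h
      · exact ⟨vb i 0, Finset.mem_filter.mpr ⟨h, rfl⟩, rfl⟩
      · exact ⟨vb i 1, Finset.mem_filter.mpr ⟨h, rfl⟩, rfl⟩
    have := Finset.card_le_card_of_surjOn pidx hsurj
    simpa [Finset.card_image_of_injective _ (Option.some_injective _)] using this
  have h2 : T.card ≤ (S.filter (fun x => ¬ isB x = true)).card := by
    apply Finset.card_le_card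
    intro x hx
    simp only [Finset.mem_filter]
    exact ⟨hT hx, by simp [hTnp x hx]⟩
  omega


lemma dom_lower (hn : 0 < n) (hS : Dominates (graphD m n) S) : m + 1 ≤ S.card := by
  rcases c_mem hS ⟨0, hn⟩ with h | ⟨l, h⟩
  · simpa using card_ge (pair_mem hS) {va 1} (by simpa) (by simp [isB])
  · simpa using card_ge (pair_mem hS) {vc l} (by simpa) (by simp [isB])

def S0 (m n : ℕ) : Finset (Fin 2 ⊕ (Fin m × Fin 2) ⊕ Fin n) :=
  insert (va 1) (Finset.univ.image (fun i => vb i 0))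

lemma S0_mem {x} : x ∈ S0 m n ↔ x = va 1 ∨ ∃ i, x = vb i 0 := by
  simp [S0, eq_comm]

lemma S0_dom : Dominates (graphD m n) (S0 m n) := by
  intro v
  rcases v with x | ⟨i, k⟩ | j
  · rcases fin2 x with rfl | rfl
    · exact Or.inr ⟨va 1, S0_mem.mpr (Or.inl rfl), by simp⟩
    · exact Or.inl (S0_mem.mpr (Or.inl rfl))
  · rcases fin2 k with rfl | rfl
    · exact Or.inl (S0_mem.mpr (Or.inr ⟨i, rfl⟩))
    · exact Or.inr ⟨vb i 0, S0_mem.mpr (Or.inr ⟨i, rfl⟩), by simp⟩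
  · exact Or.inr ⟨va 1, S0_mem.mpr (Or.inl rfl), by simp⟩

lemma S0_card : (S0 m n).card = m + 1 := by
  rw [S0, Finset.card_insert_of_notMem (by simp)]
  rw [Finset.card_image_of_injective _ (fun i j h => by simpa using h)]
  simp


/-! ### neighbor characterizations -/

lemma adj_to_b2 {i : Fin m} {u} (h : (graphD m n).Adj u (vb i 1)) : u = vb i 0 := by
  rcases u with x | ⟨j, l⟩ | j
  · simp at h
  · rw [adj_bb] at h
    obtain ⟨h1, h2⟩ := h
    have hji : j = i := by
      rcases h2 with ⟨_, hh⟩ | hh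
      · exact absurd hh (by decide)
      · exact hh
    subst hji
    rcases fin2 l with rfl | rfl
    · rfl
    · simp at h1
  · simp at h

lemma adj_to_a1 {u} (h : (graphD m n).Adj u (va 0)) : u = va 1 ∨ ∃ j, u = vb j 0 := by
  rcases u with x | ⟨j, l⟩ | j
  · rw [adj_aa] at h
    rcases fin2 x with rfl | rfl
    · simp at h
    · exact Or.inl rfl
  · rw [adj_ba] at h
    subst h
    exact Or.inr ⟨j, rfl⟩
  · rw [adj_ca] at h
    simp at h

lemma adj_to_a2 {u} (h : (graphD m n).Adj u (va 1)) :
    u = va 0 ∨ (∃ j, u = vb j 0) ∨ ∃ l, u = vc l := by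
  rcases u with x | ⟨j, l⟩ | j
  · rw [adj_aa] at h
    rcases fin2 x with rfl | rfl
    · exact Or.inl rfl
    · simp at h
  · rw [adj_ba] at h
    subst h
    exact Or.inr (Or.inl ⟨j, rfl⟩)
  · exact Or.inr (Or.inr ⟨j, rfl⟩)

lemma adj_to_c {j : Fin n} {u} (h : (graphD m n).Adj u (vc j)) :
    u = va 1 ∨ ∃ l, l ≠ j ∧ u = vc l := by
  rcases u with x | ⟨i, l⟩ | l
  · rw [adj_ac] at h
    subst h
    exact Or.inl rfl
  · exact absurd h (by simp)
  · rw [adj_cc] at h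
    exact Or.inr ⟨l, h, rfl⟩

/-! ### moves -/

lemma move_mem {V : Type*} [DecidableEq V] {S : Finset V} {v v' x : V} (hv : v ∈ S) :
    x ∈ insert v' (S.erase v) ↔ x = v' ∨ (x ∈ S ∧ x ≠ v) := by
  simp only [Finset.mem_insert, Finset.mem_erase]
  tauto

lemma move_card {V : Type*} [DecidableEq V] {S : Finset V} {v v' : V}
    (hv : v ∈ S) (hv' : v' ∉ S) : (insert v' (S.erase v)).card = S.card := by
  rw [Finset.card_insert_of_notMem (fun h => hv' (Finset.mem_of_mem_erase h)),
    Finset.card_erase_of_mem hv]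
  have : 0 < S.card := Finset.card_pos.mpr ⟨v, hv⟩
  omega

lemma adjacentSets_card {V : Type*} [DecidableEq V] {G : SimpleGraph V} {S S' : Finset V}
    (h : AdjacentSets G S S') : S'.card = S.card := by
  obtain ⟨v, v', hv, hv', _, rfl⟩ := h
  exact move_card hv hv'

lemma response_eq {V : Type*} [DecidableEq V] {G : SimpleGraph V} {S S' : Finset V} {v : V}
    (hAdj : AdjacentSets G S S') (hv : v ∉ S) (hv' : v ∈ S') :
    ∃ u ∈ S, G.Adj u v ∧ S' = insert v (S.erase u) := by
  obtain ⟨u, u', hu, hu', hadj, rfl⟩ := hAdj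
  rcases (move_mem hu).mp hv' with rfl | ⟨h1, _⟩
  · exact ⟨u, hu, hadj, rfl⟩
  · exact absurd h1 hv


/-! ### eternal domination: upper bound -/

def ECfg (f : Fin m → Fin 2) (y : Fin 2) (z : Fin n)
    (S : Finset (Fin 2 ⊕ (Fin m × Fin 2) ⊕ Fin n)) : Prop :=
  ∀ x, x ∈ S ↔ (∃ i, x = vb i (f i)) ∨ x = va y ∨ x = vc z

lemma ecfg_dom {f y z} (h : ECfg (m := m) (n := n) f y z S) : Dominates (graphD m n) S := by
  intro v
  rcases v with x | ⟨i, k⟩ | j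
  · by_cases hxy : x = y
    · exact Or.inl ((h _).mpr (Or.inr (Or.inl (by rw [hxy]))))
    · exact Or.inr ⟨va y, (h _).mpr (Or.inr (Or.inl rfl)), by simp [Ne.symm hxy]⟩
  · by_cases hk : k = f i
    · exact Or.inl ((h _).mpr (Or.inl ⟨i, by rw [hk]⟩))
    · refine Or.inr ⟨vb i (f i), (h _).mpr (Or.inl ⟨i, rfl⟩), ?_⟩
      rw [adj_bb]
      exact ⟨fun hc => hk hc.2.symm, Or.inr rfl⟩
  · by_cases hj : j = z
    · exact Or.inl ((h _).mpr (Or.inr (Or.inr (by rw [hj]))))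
    · exact Or.inr ⟨vc z, (h _).mpr (Or.inr (Or.inr rfl)), by simp [Ne.symm hj]⟩

lemma ecfg_defense {f y z} (h : ECfg (m := m) (n := n) f y z S) (v) (hv : v ∉ S) :
    ∃ S', (∃ f' y' z', ECfg (m := m) (n := n) f' y' z' S') ∧
      AdjacentSets (graphD m n) S S' ∧ v ∈ S' := by
  rcases v with x | ⟨i, k⟩ | j
  · have hxy : x ≠ y := fun hc => hv ((h _).mpr (Or.inr (Or.inl (by rw [hc]))))
    have hyS : va y ∈ S := (h _).mpr (Or.inr (Or.inl rfl))
    refine ⟨insert (va x) (S.erase (va y)), ⟨f, x, z, ?_⟩,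
      ⟨va y, va x, hyS, hv, by simp [Ne.symm hxy], rfl⟩, by simp [move_mem hyS]⟩
    intro u
    rw [move_mem hyS, h u]
    constructor
    · rintro (rfl | ⟨(⟨i', rfl⟩ | rfl | rfl), hne⟩)
      · exact Or.inr (Or.inl rfl)
      · exact Or.inl ⟨i', rfl⟩
      · exact absurd rfl hne
      · exact Or.inr (Or.inr rfl)
    · rintro (⟨i', rfl⟩ | rfl | rfl)
      · exact Or.inr ⟨Or.inl ⟨i', rfl⟩, by simp⟩
      · exact Or.inl rfl
      · exact Or.inr ⟨Or.inr (Or.inr rfl), by simp⟩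
  · have hki : k ≠ f i := fun hc => hv ((h _).mpr (Or.inl ⟨i, by rw [hc]⟩))
    have hbS : vb i (f i) ∈ S := (h _).mpr (Or.inl ⟨i, rfl⟩)
    refine ⟨insert (vb i k) (S.erase (vb i (f i))), ⟨Function.update f i k, y, z, ?_⟩,
      ⟨vb i (f i), vb i k, hbS, hv, by
        rw [adj_bb]; exact ⟨fun hc => hki hc.2.symm, Or.inr rfl⟩, rfl⟩, by simp [move_mem hbS]⟩
    intro u
    rw [move_mem hbS, h u]
    constructor
    · rintro (rfl | ⟨(⟨i', rfl⟩ | rfl | rfl), hne⟩)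
      · exact Or.inl ⟨i, by simp⟩
      · by_cases hii : i' = i
        · subst hii; exact absurd rfl hne
        · exact Or.inl ⟨i', by simp [Function.update_of_ne hii]⟩
      · exact Or.inr (Or.inl rfl)
      · exact Or.inr (Or.inr rfl)
    · rintro (⟨i', rfl⟩ | rfl | rfl)
      · by_cases hii : i' = i
        · subst hii; exact Or.inl (by simp)
        · exact Or.inr ⟨Or.inl ⟨i', by simp [Function.update_of_ne hii]⟩, by simp [hii]⟩
      · exact Or.inr ⟨Or.inr (Or.inl rfl), by simp⟩
      · exact Or.inr ⟨Or.inr (Or.inr rfl), by simp⟩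
  · have hjz : j ≠ z := fun hc => hv ((h _).mpr (Or.inr (Or.inr (by rw [hc]))))
    have hzS : vc z ∈ S := (h _).mpr (Or.inr (Or.inr rfl))
    refine ⟨insert (vc j) (S.erase (vc z)), ⟨f, y, j, ?_⟩,
      ⟨vc z, vc j, hzS, hv, by simp [Ne.symm hjz], rfl⟩, by simp [move_mem hzS]⟩
    intro u
    rw [move_mem hzS, h u]
    constructor
    · rintro (rfl | ⟨(⟨i', rfl⟩ | rfl | rfl), hne⟩)
      · exact Or.inr (Or.inr rfl)
      · exact Or.inl ⟨i', rfl⟩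
      · exact Or.inr (Or.inl rfl)
      · exact absurd rfl hne
    · rintro (⟨i', rfl⟩ | rfl | rfl)
      · exact Or.inr ⟨Or.inl ⟨i', rfl⟩, by simp⟩
      · exact Or.inr ⟨Or.inr (Or.inl rfl), by simp⟩
      · exact Or.inl rfl

def SE (m n : ℕ) (hn : 0 < n) : Finset (Fin 2 ⊕ (Fin m × Fin 2) ⊕ Fin n) :=
  insert (va 1) (insert (vc ⟨0, hn⟩) (Finset.univ.image (fun i => vb i 0)))

lemma SE_cfg (hn : 0 < n) : ECfg (m := m) (fun _ => 0) 1 ⟨0, hn⟩ (SE m n hn) := by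
  intro x
  simp [SE, eq_comm]
  tauto

lemma SE_card (hn : 0 < n) : (SE m n hn).card = m + 2 := by
  rw [SE, Finset.card_insert_of_notMem (by simp), Finset.card_insert_of_notMem (by simp),
    Finset.card_image_of_injective _ (fun i j h => by simpa using h)]
  simp


/-! ### eternal domination: lower bound -/

lemma small_structure (hn : 0 < n) (hS : Dominates (graphD m n) S) (hcard : S.card = m + 1) :
    ∃ (f : Fin m → Fin 2) (z : Fin 2 ⊕ (Fin m × Fin 2) ⊕ Fin n),
      (∀ x, x ∈ S ↔ (∃ i, x = vb i (f i)) ∨ x = z) ∧ (z = va 1 ∨ ∃ l, z = vc l) := by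
  classical
  set f : Fin m → Fin 2 := fun i => if vb i 0 ∈ S then 0 else 1 with hf
  have hfS : ∀ i, vb i (f i) ∈ S := by
    intro i
    rcases pair_mem hS i with h | h
    · simpa [hf, h] using h
    · by_cases h0 : vb i 0 ∈ S
      · simpa [hf, h0] using h0
      · simpa [hf, h0] using h
  obtain ⟨z, hzS, hzt⟩ : ∃ z, z ∈ S ∧ (z = va 1 ∨ ∃ l, z = vc l) := by
    rcases c_mem hS ⟨0, hn⟩ with h | ⟨l, h⟩
    · exact ⟨va 1, h, Or.inl rfl⟩
    · exact ⟨vc l, h, Or.inr ⟨l, rfl⟩⟩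
  set T : Finset (Fin 2 ⊕ (Fin m × Fin 2) ⊕ Fin n) :=
    insert z (Finset.univ.image (fun i => vb i (f i))) with hT
  have hTS : T ⊆ S := by
    intro x hx
    rw [hT, Finset.mem_insert] at hx
    rcases hx with rfl | hx
    · exact hzS
    · obtain ⟨i, _, rfl⟩ := Finset.mem_image.mp hx
      exact hfS i
  have hTcard : T.card = m + 1 := by
    rw [hT, Finset.card_insert_of_notMem, Finset.card_image_of_injective _
      (fun i j h => ((by simpa using h) : i = j ∧ f i = f j).1)]
    · simp
    · rcases hzt with rfl | ⟨l, rfl⟩ <;> simp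
  have hST : S = T := (Finset.eq_of_subset_of_card_le hTS (by omega)).symm
  refine ⟨f, z, ?_, hzt⟩
  intro x
  rw [hST, hT]
  simp only [Finset.mem_insert, Finset.mem_image, Finset.mem_univ, true_and]
  constructor
  · rintro (rfl | ⟨i, rfl⟩)
    · exact Or.inr rfl
    · exact Or.inl ⟨i, rfl⟩
  · rintro (⟨i, rfl⟩ | rfl)
    · exact Or.inr ⟨i, rfl⟩
    · exact Or.inl rfl

lemma eternal_aux (hn : 0 < n) {F : Set (Finset (Fin 2 ⊕ (Fin m × Fin 2) ⊕ Fin n))}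
    (hF : EternalFamily (graphD m n) F) :
    ∀ μ : ℕ, ∀ (S : Finset (Fin 2 ⊕ (Fin m × Fin 2) ⊕ Fin n)) (f : Fin m → Fin 2)
      (z : Fin 2 ⊕ (Fin m × Fin 2) ⊕ Fin n), S ∈ F →
      (∀ x, x ∈ S ↔ (∃ i, x = vb i (f i)) ∨ x = z) →
      (z = va 1 ∨ ∃ l, z = vc l) →
      μ = (Finset.univ.filter (fun i => f i = 0)).card + (if z = va 1 then 0 else 1) →
      False := by
  intro μ
  induction μ using Nat.strong_induction_on with
  | _ μ IH =>
  intro S f z hSF hchar hz hμ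
  rcases hz with rfl | ⟨l, rfl⟩
  · -- z = a2
    by_cases hex : ∃ i, f i = 0
    · obtain ⟨i, hfi⟩ := hex
      have hvB : vb i 1 ∉ S := by
        rw [hchar]
        rintro (⟨i', h⟩ | h)
        · obtain ⟨h1, h2⟩ : i = i' ∧ (1:Fin 2) = f i' := by simpa using h
          subst h1
          rw [hfi] at h2
          exact absurd h2 (by decide)
        · simp at h
      obtain ⟨S', hS'F, hAdj, hvS'⟩ := hF.2 S hSF (vb i 1) hvB
      obtain ⟨u, huS, hadj, rfl⟩ := response_eq hAdj hvB hvS'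
      have hu : u = vb i 0 := adj_to_b2 hadj
      subst hu
      have hpos : 0 < μ := by
        have : 0 < (Finset.univ.filter (fun j => f j = 0)).card :=
          Finset.card_pos.mpr ⟨i, by simp [hfi]⟩
        omega
      apply IH (μ - 1) (Nat.sub_lt hpos one_pos) _ (Function.update f i 1) (va 1) hS'F ?_
        (Or.inl rfl) ?_
      · intro x
        rw [move_mem huS, hchar x]
        constructor
        · rintro (rfl | ⟨(⟨i', rfl⟩ | rfl), hne⟩)
          · exact Or.inl ⟨i, by simp⟩
          · by_cases hii : i' = i
            · subst hii; rw [hfi] at hne; exact absurd rfl hne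
            · exact Or.inl ⟨i', by simp [Function.update_of_ne hii]⟩
          · exact Or.inr rfl
        · rintro (⟨i', rfl⟩ | rfl)
          · by_cases hii : i' = i
            · subst hii; exact Or.inl (by simp)
            · refine Or.inr ⟨Or.inl ⟨i', by simp [Function.update_of_ne hii]⟩, by simp [hii]⟩
          · exact Or.inr ⟨Or.inr rfl, by simp⟩
      · have hset : Finset.univ.filter (fun j => Function.update f i 1 j = 0) =
            (Finset.univ.filter (fun j => f j = 0)).erase i := by
          ext j
          by_cases hj : j = i
          · subst hj; simp
          · simp [Function.update_of_ne hj, hj]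
        rw [hset, Finset.card_erase_of_mem (by simp [hfi])]
        have : 0 < (Finset.univ.filter (fun j => f j = 0)).card :=
          Finset.card_pos.mpr ⟨i, by simp [hfi]⟩
        have h2 : (if (va 1 : Fin 2 ⊕ (Fin m × Fin 2) ⊕ Fin n) = va 1 then (0:ℕ) else 1) = 0 := by
          simp
        rw [h2] at hμ ⊢
        omega
    · -- all guards down, a2 occupied: attack c and win
      have hvC : vc ⟨0, hn⟩ ∉ S := by
        rw [hchar]
        rintro (⟨i', h⟩ | h) <;> simp at h
      obtain ⟨S', hS'F, hAdj, hvS'⟩ := hF.2 S hSF (vc ⟨0, hn⟩) hvC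
      obtain ⟨u, huS, hadj, rfl⟩ := response_eq hAdj hvC hvS'
      have hu : u = va 1 := by
        rcases (hchar u).mp huS with ⟨i', rfl⟩ | rfl
        · exact absurd hadj (by simp)
        · rfl
      subst hu
      -- now a1 is undominated in S'
      rcases hF.1 _ hS'F (va 0) with hmem | ⟨w, hw, hadjw⟩
      · rw [move_mem huS] at hmem
        rcases hmem with h | ⟨h, -⟩
        · simp at h
        · rw [hchar] at h
          rcases h with ⟨i', h⟩ | h <;> simp at h
      · rcases adj_to_a1 hadjw with rfl | ⟨j, rfl⟩
        · rw [move_mem huS] at hw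
          rcases hw with h | ⟨-, h⟩
          · simp at h
          · exact h rfl
        · rw [move_mem huS] at hw
          rcases hw with h | ⟨h, -⟩
          · simp at h
          · rw [hchar] at h
            rcases h with ⟨i', h⟩ | h
            · obtain ⟨hji, hf0⟩ := by simpa using h
              exact hex ⟨i', hf0.symm⟩
            · simp at h
  · -- z = c_l : attack a2
    have hvA : va 1 ∉ S := by
      rw [hchar]
      rintro (⟨i', h⟩ | h) <;> simp at h
    obtain ⟨S', hS'F, hAdj, hvS'⟩ := hF.2 S hSF (va 1) hvA
    obtain ⟨u, huS, hadj, rfl⟩ := response_eq hAdj hvA hvS'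
    rcases (hchar u).mp huS with ⟨i, rfl⟩ | rfl
    · -- a b-guard moved to a2: pair i abandoned
      have hfi : f i = 0 := by rwa [adj_ba] at hadj
      rcases hF.1 _ hS'F (vb i 1) with hmem | ⟨w, hw, hadjw⟩
      · rw [move_mem huS] at hmem
        rcases hmem with h | ⟨h, hne⟩
        · simp at h
        · rw [hchar] at h
          rcases h with ⟨i', h⟩ | h
          · obtain ⟨hii, hf1⟩ := by simpa using h
            rw [← hii, hfi] at hf1
            simp at hf1
          · simp at h
      · have hw' : w = vb i 0 := adj_to_b2 hadjw
        subst hw'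
        rw [move_mem huS] at hw
        rcases hw with h | ⟨-, hne⟩
        · simp at h
        · rw [hfi] at hne
          exact hne rfl
    · -- the c-guard moved to a2
      have h1 : (if (vc l : Fin 2 ⊕ (Fin m × Fin 2) ⊕ Fin n) = va 1 then (0:ℕ) else 1) = 1 := by
        simp
      have hpos : 0 < μ := by rw [h1] at hμ; omega
      apply IH (μ - 1) (Nat.sub_lt hpos one_pos) _ f (va 1) hS'F ?_ (Or.inl rfl) ?_
      · intro x
        rw [move_mem huS, hchar x]
        constructor
        · rintro (rfl | ⟨(⟨i', rfl⟩ | rfl), hne⟩)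
          · exact Or.inr rfl
          · exact Or.inl ⟨i', rfl⟩
          · exact absurd rfl hne
        · rintro (⟨i', rfl⟩ | rfl)
          · exact Or.inr ⟨Or.inl ⟨i', rfl⟩, by simp⟩
          · exact Or.inl rfl
      · have h2 : (if (va 1 : Fin 2 ⊕ (Fin m × Fin 2) ⊕ Fin n) = va 1 then (0:ℕ) else 1) = 0 := by
          simp
        rw [h1] at hμ
        rw [h2]
        omega


/-! ### autonomous domination: upper bound -/

lemma mk_defense {u v : Fin 2 ⊕ (Fin m × Fin 2) ⊕ Fin n} (hu : u ∈ S) (hv : v ∉ S)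
    (hadj : (graphD m n).Adj u v) (hdom' : Dominates (graphD m n) (insert v (S.erase u)))
    (hcard : S.card = m + n + 1) :
    ∃ S', (Dominates (graphD m n) S' ∧ S'.card = m + n + 1) ∧
      AdjacentSets (graphD m n) S S' ∧ v ∈ S' :=
  ⟨_, ⟨hdom', by rw [move_card hu hv]; exact hcard⟩, ⟨u, v, hu, hv, hadj, rfl⟩, by simp⟩

lemma exists_free_c (hdom : Dominates (graphD m n) S) (hcard : S.card ≤ m + n)
    (ha : va 1 ∈ S) : ∃ l, vc l ∉ S := by
  by_contra hc
  push_neg at hc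
  have hT : ((insert (va 1) (Finset.univ.image vc)) : Finset (Fin 2 ⊕ (Fin m × Fin 2) ⊕ Fin n)) ⊆ S := by
    intro x hx
    rcases Finset.mem_insert.mp hx with rfl | hx
    · exact ha
    · obtain ⟨l, -, rfl⟩ := Finset.mem_image.mp hx
      exact hc l
  have hTc : ((insert (va 1) (Finset.univ.image vc)) : Finset (Fin 2 ⊕ (Fin m × Fin 2) ⊕ Fin n)).card = n + 1 := by
    rw [Finset.card_insert_of_notMem (by simp),
      Finset.card_image_of_injective _ (fun i j h => by simpa using h)]
    simp
  have := card_ge (pair_mem hdom) _ hT (by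
    intro x hx
    rcases Finset.mem_insert.mp hx with rfl | hx
    · simp [isB]
    · obtain ⟨l, -, rfl⟩ := Finset.mem_image.mp hx
      simp [isB])
  rw [hTc] at this
  omega

/-- defense against attack on a c-vertex -/
lemma autdef_c (hn : 0 < n) (hdom : Dominates (graphD m n) S) (hcard : S.card = m + n + 1)
    {j : Fin n} (hv : vc j ∉ S) :
    ∃ S', (Dominates (graphD m n) S' ∧ S'.card = m + n + 1) ∧
      AdjacentSets (graphD m n) S S' ∧ vc j ∈ S' := by
  by_cases hC : ∃ l, vc l ∈ S
  · obtain ⟨l, hl⟩ := hC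
    have hlj : l ≠ j := fun h => hv (h ▸ hl)
    refine mk_defense hl hv (by simp [hlj]) ?_ hcard
    intro w
    rcases w with x | ⟨i', k'⟩ | j'
    · rcases fin2 x with rfl | rfl
      · rcases a1_mem hdom with h | h | ⟨jj, h⟩
        · exact Or.inl ((move_mem hl).mpr (Or.inr ⟨h, by simp⟩))
        · exact Or.inr ⟨va 1, (move_mem hl).mpr (Or.inr ⟨h, by simp⟩), by simp⟩
        · exact Or.inr ⟨vb jj 0, (move_mem hl).mpr (Or.inr ⟨h, by simp⟩), by simp⟩
      · exact Or.inr ⟨vc j, (move_mem hl).mpr (Or.inl rfl), by simp⟩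
    · rcases fin2 k' with rfl | rfl
      · rcases pair_mem hdom i' with h | h
        · exact Or.inl ((move_mem hl).mpr (Or.inr ⟨h, by simp⟩))
        · exact Or.inr ⟨vb i' 1, (move_mem hl).mpr (Or.inr ⟨h, by simp⟩), by simp⟩
      · rcases pair_mem hdom i' with h | h
        · exact Or.inr ⟨vb i' 0, (move_mem hl).mpr (Or.inr ⟨h, by simp⟩), by simp⟩
        · exact Or.inl ((move_mem hl).mpr (Or.inr ⟨h, by simp⟩))
    · by_cases hjj : j' = j
      · exact Or.inl ((move_mem hl).mpr (Or.inl (by rw [hjj])))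
      · exact Or.inr ⟨vc j, (move_mem hl).mpr (Or.inl rfl), by simp [Ne.symm hjj]⟩
  · -- no c-guard: a2 must be in S, and some top guard other than a2 exists
    push_neg at hC
    have ha2 : va 1 ∈ S := by
      rcases c_mem hdom j with h | ⟨l, h⟩
      · exact h
      · exact absurd h (hC l)
    have htop : va 0 ∈ S ∨ ∃ jj, vb jj 0 ∈ S := by
      by_contra hcon
      push_neg at hcon
      have hsub : S ⊆ insert (va 1) (Finset.univ.image (fun i => vb i 1)) := by
        intro x hx
        rcases x with x | ⟨i', k'⟩ | j'
        · rcases fin2 x with rfl | rfl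
          · exact absurd hx hcon.1
          · simp
        · rcases fin2 k' with rfl | rfl
          · exact absurd hx (hcon.2 i')
          · simp
        · exact absurd hx (hC j')
      have hle := Finset.card_le_card hsub
      rw [Finset.card_insert_of_notMem (by simp),
        Finset.card_image_of_injective _ (fun i j h => by simpa using h)] at hle
      simp at hle
      omega
    refine mk_defense ha2 hv (by simp) ?_ hcard
    intro w
    rcases w with x | ⟨i', k'⟩ | j'
    · rcases fin2 x with rfl | rfl
      · rcases htop with h | ⟨jj, h⟩
        · exact Or.inl ((move_mem ha2).mpr (Or.inr ⟨h, by simp⟩))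
        · exact Or.inr ⟨vb jj 0, (move_mem ha2).mpr (Or.inr ⟨h, by simp⟩), by simp⟩
      · exact Or.inr ⟨vc j, (move_mem ha2).mpr (Or.inl rfl), by simp⟩
    · rcases fin2 k' with rfl | rfl
      · rcases pair_mem hdom i' with h | h
        · exact Or.inl ((move_mem ha2).mpr (Or.inr ⟨h, by simp⟩))
        · exact Or.inr ⟨vb i' 1, (move_mem ha2).mpr (Or.inr ⟨h, by simp⟩), by simp⟩
      · rcases pair_mem hdom i' with h | h
        · exact Or.inr ⟨vb i' 0, (move_mem ha2).mpr (Or.inr ⟨h, by simp⟩), by simp⟩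
        · exact Or.inl ((move_mem ha2).mpr (Or.inr ⟨h, by simp⟩))
    · by_cases hjj : j' = j
      · exact Or.inl ((move_mem ha2).mpr (Or.inl (by rw [hjj])))
      · exact Or.inr ⟨vc j, (move_mem ha2).mpr (Or.inl rfl), by simp [Ne.symm hjj]⟩


/-- defense against attack on a pendant vertex `b_i^2` -/
lemma autdef_b2 (hdom : Dominates (graphD m n) S) (hcard : S.card = m + n + 1)
    {i : Fin m} (hv : vb i 1 ∉ S) :
    ∃ S', (Dominates (graphD m n) S' ∧ S'.card = m + n + 1) ∧
      AdjacentSets (graphD m n) S S' ∧ vb i 1 ∈ S' := by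
  have hu : vb i 0 ∈ S := (pair_mem hdom i).resolve_right hv
  -- there is some other top guard
  have htop : ∃ w ∈ S, w ≠ vb i 0 ∧
      (w = va 0 ∨ w = va 1 ∨ ∃ j', j' ≠ i ∧ w = vb j' 0) := by
    by_contra hcon
    push_neg at hcon
    have hsub : S ⊆ insert (vb i 0)
        (((Finset.univ.image (fun l => vb l 1)).erase (vb i 1)) ∪ Finset.univ.image vc) := by
      intro x hx
      rcases x with x | ⟨i', k'⟩ | j'
      · rcases fin2 x with rfl | rfl
        · exact absurd rfl (hcon _ hx (by simp)).1
        · exact absurd rfl (hcon _ hx (by simp)).2.1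
      · rcases fin2 k' with rfl | rfl
        · by_cases hii : i' = i
          · subst hii; simp
          · exact absurd rfl ((hcon _ hx (by simp [hii])).2.2 i' hii)
        · have hii : i' ≠ i := fun h => hv (h ▸ hx)
          simp [hii]
      · simp
    have hle := Finset.card_le_card hsub
    have h1 : ((Finset.univ.image (fun l : Fin m => vb l 1)).erase
        ((vb i 1 : Fin 2 ⊕ (Fin m × Fin 2) ⊕ Fin n))).card = m - 1 := by
      rw [Finset.card_erase_of_mem (by simp),
        Finset.card_image_of_injective _ (fun a b h => by simpa using h)]
      simp
    have h2 := Finset.card_union_le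
      ((Finset.univ.image (fun l : Fin m => vb l 1)).erase ((vb i 1 : Fin 2 ⊕ (Fin m × Fin 2) ⊕ Fin n)))
      ((Finset.univ.image vc : Finset (Fin 2 ⊕ (Fin m × Fin 2) ⊕ Fin n)))
    have h3 : ((Finset.univ.image vc : Finset (Fin 2 ⊕ (Fin m × Fin 2) ⊕ Fin n))).card = n := by
      rw [Finset.card_image_of_injective _ (fun a b h => by simpa using h)]; simp
    have h4 := Finset.card_insert_le ((vb i 0 : Fin 2 ⊕ (Fin m × Fin 2) ⊕ Fin n))
      (((Finset.univ.image (fun l => vb l 1)).erase (vb i 1)) ∪ Finset.univ.image vc)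
    have hm1 : 1 ≤ m := by
      rcases Nat.eq_zero_or_pos m with h | h
      · exact absurd i.2 (by omega)
      · exact h
    omega
  obtain ⟨w0, hw0S, hw0ne, hw0⟩ := htop
  refine mk_defense hu hv (by simp) ?_ hcard
  intro w
  rcases w with x | ⟨i', k'⟩ | j'
  · rcases fin2 x with rfl | rfl
    · rcases hw0 with rfl | rfl | ⟨j', hji, rfl⟩
      · exact Or.inl ((move_mem hu).mpr (Or.inr ⟨hw0S, hw0ne⟩))
      · exact Or.inr ⟨va 1, (move_mem hu).mpr (Or.inr ⟨hw0S, hw0ne⟩), by simp⟩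
      · exact Or.inr ⟨vb j' 0, (move_mem hu).mpr (Or.inr ⟨hw0S, hw0ne⟩), by simp⟩
    · rcases hw0 with rfl | rfl | ⟨j', hji, rfl⟩
      · exact Or.inr ⟨va 0, (move_mem hu).mpr (Or.inr ⟨hw0S, hw0ne⟩), by simp⟩
      · exact Or.inl ((move_mem hu).mpr (Or.inr ⟨hw0S, hw0ne⟩))
      · exact Or.inr ⟨vb j' 0, (move_mem hu).mpr (Or.inr ⟨hw0S, hw0ne⟩), by simp⟩
  · by_cases hii : i' = i
    · subst hii
      rcases fin2 k' with rfl | rfl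
      · exact Or.inr ⟨vb i' 1, (move_mem hu).mpr (Or.inl rfl), by simp⟩
      · exact Or.inl ((move_mem hu).mpr (Or.inl rfl))
    · rcases fin2 k' with rfl | rfl
      · rcases pair_mem hdom i' with h | h
        · exact Or.inl ((move_mem hu).mpr (Or.inr ⟨h, by simp [hii]⟩))
        · exact Or.inr ⟨vb i' 1, (move_mem hu).mpr (Or.inr ⟨h, by simp⟩), by simp⟩
      · rcases pair_mem hdom i' with h | h
        · exact Or.inr ⟨vb i' 0, (move_mem hu).mpr (Or.inr ⟨h, by simp [hii]⟩), by simp⟩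
        · exact Or.inl ((move_mem hu).mpr (Or.inr ⟨h, by simp⟩))
  · rcases c_mem hdom j' with h | ⟨l, h⟩
    · exact Or.inr ⟨va 1, (move_mem hu).mpr (Or.inr ⟨h, by simp⟩), by simp⟩
    · by_cases hlj : l = j'
      · exact Or.inl ((move_mem hu).mpr (Or.inr ⟨hlj ▸ h, by simp⟩))
      · exact Or.inr ⟨vc l, (move_mem hu).mpr (Or.inr ⟨h, by simp⟩), by simp [hlj]⟩

/-- defense against attack on `b_i^1` -/
lemma autdef_b1 (hdom : Dominates (graphD m n) S) (hcard : S.card = m + n + 1)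
    {i : Fin m} (hv : vb i 0 ∉ S) :
    ∃ S', (Dominates (graphD m n) S' ∧ S'.card = m + n + 1) ∧
      AdjacentSets (graphD m n) S S' ∧ vb i 0 ∈ S' := by
  have hu : vb i 1 ∈ S := (pair_mem hdom i).resolve_left hv
  refine mk_defense hu hv (by simp) ?_ hcard
  intro w
  rcases w with x | ⟨i', k'⟩ | j'
  · rcases fin2 x with rfl | rfl
    · exact Or.inr ⟨vb i 0, (move_mem hu).mpr (Or.inl rfl), by simp⟩
    · exact Or.inr ⟨vb i 0, (move_mem hu).mpr (Or.inl rfl), by simp⟩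
  · by_cases hii : i' = i
    · subst hii
      rcases fin2 k' with rfl | rfl
      · exact Or.inl ((move_mem hu).mpr (Or.inl rfl))
      · exact Or.inr ⟨vb i' 0, (move_mem hu).mpr (Or.inl rfl), by simp⟩
    · rcases fin2 k' with rfl | rfl
      · exact Or.inr ⟨vb i 0, (move_mem hu).mpr (Or.inl rfl), by simp [Ne.symm hii]⟩
      · rcases pair_mem hdom i' with h | h
        · exact Or.inr ⟨vb i' 0, (move_mem hu).mpr (Or.inr ⟨h, by simp⟩), by simp⟩
        · exact Or.inl ((move_mem hu).mpr (Or.inr ⟨h, by simp [hii]⟩))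
  · rcases c_mem hdom j' with h | ⟨l, h⟩
    · exact Or.inr ⟨va 1, (move_mem hu).mpr (Or.inr ⟨h, by simp⟩), by simp⟩
    · by_cases hlj : l = j'
      · exact Or.inl ((move_mem hu).mpr (Or.inr ⟨hlj ▸ h, by simp⟩))
      · exact Or.inr ⟨vc l, (move_mem hu).mpr (Or.inr ⟨h, by simp⟩), by simp [hlj]⟩

/-- defense against attack on `a_2` -/
lemma autdef_a2 (hn : 0 < n) (hdom : Dominates (graphD m n) S) (hcard : S.card = m + n + 1)
    (hv : va 1 ∉ S) :
    ∃ S', (Dominates (graphD m n) S' ∧ S'.card = m + n + 1) ∧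
      AdjacentSets (graphD m n) S S' ∧ va 1 ∈ S' := by
  obtain ⟨l, hl⟩ : ∃ l, vc l ∈ S := by
    rcases c_mem hdom ⟨0, hn⟩ with h | h
    · exact absurd h hv
    · exact h
  refine mk_defense hl hv (by simp) ?_ hcard
  intro w
  rcases w with x | ⟨i', k'⟩ | j'
  · rcases fin2 x with rfl | rfl
    · exact Or.inr ⟨va 1, (move_mem hl).mpr (Or.inl rfl), by simp⟩
    · exact Or.inl ((move_mem hl).mpr (Or.inl rfl))
  · rcases fin2 k' with rfl | rfl
    · rcases pair_mem hdom i' with h | h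
      · exact Or.inl ((move_mem hl).mpr (Or.inr ⟨h, by simp⟩))
      · exact Or.inr ⟨vb i' 1, (move_mem hl).mpr (Or.inr ⟨h, by simp⟩), by simp⟩
    · rcases pair_mem hdom i' with h | h
      · exact Or.inr ⟨vb i' 0, (move_mem hl).mpr (Or.inr ⟨h, by simp⟩), by simp⟩
      · exact Or.inl ((move_mem hl).mpr (Or.inr ⟨h, by simp⟩))
  · exact Or.inr ⟨va 1, (move_mem hl).mpr (Or.inl rfl), by simp⟩

/-- defense against attack on `a_1` -/
lemma autdef_a1 (hdom : Dominates (graphD m n) S) (hcard : S.card = m + n + 1)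
    (hv : va 0 ∉ S) :
    ∃ S', (Dominates (graphD m n) S' ∧ S'.card = m + n + 1) ∧
      AdjacentSets (graphD m n) S S' ∧ va 0 ∈ S' := by
  by_cases hdbl : ∃ j, vb j 0 ∈ S ∧ vb j 1 ∈ S
  · obtain ⟨j, hj0, hj1⟩ := hdbl
    refine mk_defense hj0 hv (by simp) ?_ hcard
    intro w
    rcases w with x | ⟨i', k'⟩ | j'
    · rcases fin2 x with rfl | rfl
      · exact Or.inl ((move_mem hj0).mpr (Or.inl rfl))
      · exact Or.inr ⟨va 0, (move_mem hj0).mpr (Or.inl rfl), by simp⟩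
    · by_cases hii : i' = j
      · subst hii
        rcases fin2 k' with rfl | rfl
        · exact Or.inr ⟨vb i' 1, (move_mem hj0).mpr (Or.inr ⟨hj1, by simp⟩), by simp⟩
        · exact Or.inl ((move_mem hj0).mpr (Or.inr ⟨hj1, by simp⟩))
      · rcases fin2 k' with rfl | rfl
        · rcases pair_mem hdom i' with h | h
          · exact Or.inl ((move_mem hj0).mpr (Or.inr ⟨h, by simp [hii]⟩))
          · exact Or.inr ⟨vb i' 1, (move_mem hj0).mpr (Or.inr ⟨h, by simp⟩), by simp⟩
        · rcases pair_mem hdom i' with h | h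
          · exact Or.inr ⟨vb i' 0, (move_mem hj0).mpr (Or.inr ⟨h, by simp [hii]⟩), by simp⟩
          · exact Or.inl ((move_mem hj0).mpr (Or.inr ⟨h, by simp⟩))
    · rcases c_mem hdom j' with h | ⟨l, h⟩
      · exact Or.inr ⟨va 1, (move_mem hj0).mpr (Or.inr ⟨h, by simp⟩), by simp⟩
      · by_cases hlj : l = j'
        · exact Or.inl ((move_mem hj0).mpr (Or.inr ⟨hlj ▸ h, by simp⟩))
        · exact Or.inr ⟨vc l, (move_mem hj0).mpr (Or.inr ⟨h, by simp⟩), by simp [hlj]⟩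
  · -- no doubled pair: then a2 and all of C are occupied
    push_neg at hdbl
    have key : va 1 ∈ S ∧ ∀ l, vc l ∈ S := by
      classical
      have hb : (S.filter (fun x => isB x = true)).card ≤ m := by
        have hle : (S.filter (fun x => isB x = true)).card ≤
            ((Finset.univ : Finset (Fin m)).image (some : Fin m → Option (Fin m))).card := by
          apply Finset.card_le_card_of_injOn (pidx (m := m) (n := n))
          · intro x hx
            obtain ⟨hxS, hxB⟩ := Finset.mem_filter.mp hx
            rcases x with x | ⟨ix, kx⟩ | x
            · simp [isB] at hxB
            · simp [pidx]
            · simp [isB] at hxB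
          · intro x hx y hy hxy
            obtain ⟨hxS, hxB⟩ := Finset.mem_filter.mp (Finset.mem_coe.mp hx)
            obtain ⟨hyS, hyB⟩ := Finset.mem_filter.mp (Finset.mem_coe.mp hy)
            rcases x with x | ⟨ix, kx⟩ | x
            · simp [isB] at hxB
            · rcases y with y | ⟨iy, ky⟩ | y
              · simp [isB] at hyB
              · have hii : ix = iy := by simpa [pidx] using hxy
                subst hii
                rcases fin2 kx with rfl | rfl <;> rcases fin2 ky with rfl | rfl
                · rfl
                · exact absurd hyS (hdbl ix hxS)
                · exact absurd hxS (hdbl ix hyS)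
                · rfl
              · simp [isB] at hyB
            · simp [isB] at hxB
        simpa [Finset.card_image_of_injective _ (Option.some_injective _)] using hle
      have hsplit := S.card_filter_add_card_filter_not (p := fun x => isB x = true)
      have hsub : S.filter (fun x => ¬ isB x = true) ⊆
          insert (va 1) (Finset.univ.image vc) := by
        intro x hx
        obtain ⟨hxS, hxB⟩ := Finset.mem_filter.mp hx
        rcases x with x | ⟨ix, kx⟩ | x
        · rcases fin2 x with rfl | rfl
          · exact absurd hxS hv
          · simp
        · simp [isB] at hxB
        · simp
      have hins : ((insert (va 1) (Finset.univ.image vc)) :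
          Finset (Fin 2 ⊕ (Fin m × Fin 2) ⊕ Fin n)).card = n + 1 := by
        rw [Finset.card_insert_of_notMem (by simp),
          Finset.card_image_of_injective _ (fun a b h => by simpa using h)]
        simp
      have heq : S.filter (fun x => ¬ isB x = true) = insert (va 1) (Finset.univ.image vc) := by
        apply Finset.eq_of_subset_of_card_le hsub
        omega
      constructor
      · have : va 1 ∈ S.filter (fun x => ¬ isB x = true) := by
          rw [heq]; exact Finset.mem_insert_self _ _
        exact (Finset.mem_filter.mp this).1
      · intro l
        have : vc l ∈ S.filter (fun x => ¬ isB x = true) := by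
          rw [heq]
          exact Finset.mem_insert_of_mem (Finset.mem_image.mpr ⟨l, Finset.mem_univ _, rfl⟩)
        exact (Finset.mem_filter.mp this).1
    obtain ⟨ha2, hallc⟩ := key
    refine mk_defense ha2 hv (by simp) ?_ hcard
    intro w
    rcases w with x | ⟨i', k'⟩ | j'
    · rcases fin2 x with rfl | rfl
      · exact Or.inl ((move_mem ha2).mpr (Or.inl rfl))
      · exact Or.inr ⟨va 0, (move_mem ha2).mpr (Or.inl rfl), by simp⟩
    · rcases fin2 k' with rfl | rfl
      · rcases pair_mem hdom i' with h | h
        · exact Or.inl ((move_mem ha2).mpr (Or.inr ⟨h, by simp⟩))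
        · exact Or.inr ⟨vb i' 1, (move_mem ha2).mpr (Or.inr ⟨h, by simp⟩), by simp⟩
      · rcases pair_mem hdom i' with h | h
        · exact Or.inr ⟨vb i' 0, (move_mem ha2).mpr (Or.inr ⟨h, by simp⟩), by simp⟩
        · exact Or.inl ((move_mem ha2).mpr (Or.inr ⟨h, by simp⟩))
    · exact Or.inl ((move_mem ha2).mpr (Or.inr ⟨hallc j', by simp⟩))


/-! ### autonomous domination, lower bound: single moves -/

/-- move a doubled `b_l^1` up to `a_2` -/
lemma dom_b1_to_a2 (hdom : Dominates (graphD m n) S) {l : Fin m}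
    (hl1 : vb l 1 ∈ S) (hl0 : vb l 0 ∈ S) (hc : ∃ l', vc l' ∈ S) :
    Dominates (graphD m n) (insert (va 1) (S.erase (vb l 0))) := by
  obtain ⟨l', hl'⟩ := hc
  intro w
  rcases w with x | ⟨i', k'⟩ | j'
  · rcases fin2 x with rfl | rfl
    · exact Or.inr ⟨va 1, (move_mem hl0).mpr (Or.inl rfl), by simp⟩
    · exact Or.inl ((move_mem hl0).mpr (Or.inl rfl))
  · rcases fin2 k' with rfl | rfl
    · exact Or.inr ⟨va 1, (move_mem hl0).mpr (Or.inl rfl), by simp⟩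
    · by_cases hii : i' = l
      · exact Or.inl ((move_mem hl0).mpr (Or.inr ⟨hii ▸ hl1, by simp⟩))
      · rcases pair_mem hdom i' with h | h
        · exact Or.inr ⟨vb i' 0, (move_mem hl0).mpr (Or.inr ⟨h, by simp [hii]⟩), by simp⟩
        · exact Or.inl ((move_mem hl0).mpr (Or.inr ⟨h, by simp⟩))
  · by_cases hlj : l' = j'
    · exact Or.inl ((move_mem hl0).mpr (Or.inr ⟨hlj ▸ hl', by simp⟩))
    · exact Or.inr ⟨vc l', (move_mem hl0).mpr (Or.inr ⟨hl', by simp⟩), by simp [hlj]⟩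


/-- move `b_j^2` down to `b_j^1` (when `a_2` is occupied) -/
lemma dom_b2_to_b1 (hdom : Dominates (graphD m n) S) {j : Fin m}
    (hj1 : vb j 1 ∈ S) (ha2 : va 1 ∈ S) (hc : ∃ l', vc l' ∈ S) :
    Dominates (graphD m n) (insert (vb j 0) (S.erase (vb j 1))) := by
  obtain ⟨l', hl'⟩ := hc
  intro w
  rcases w with x | ⟨i', k'⟩ | j'
  · rcases fin2 x with rfl | rfl
    · exact Or.inr ⟨va 1, (move_mem hj1).mpr (Or.inr ⟨ha2, by simp⟩), by simp⟩
    · exact Or.inl ((move_mem hj1).mpr (Or.inr ⟨ha2, by simp⟩))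
  · rcases fin2 k' with rfl | rfl
    · exact Or.inr ⟨va 1, (move_mem hj1).mpr (Or.inr ⟨ha2, by simp⟩), by simp⟩
    · by_cases hii : i' = j
      · subst hii
        exact Or.inr ⟨vb i' 0, (move_mem hj1).mpr (Or.inl rfl), by simp⟩
      · rcases pair_mem hdom i' with h | h
        · exact Or.inr ⟨vb i' 0, (move_mem hj1).mpr (Or.inr ⟨h, by simp⟩), by simp⟩
        · exact Or.inl ((move_mem hj1).mpr (Or.inr ⟨h, by simp [hii]⟩))
  · by_cases hlj : l' = j'
    · exact Or.inl ((move_mem hj1).mpr (Or.inr ⟨hlj ▸ hl', by simp⟩))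
    · exact Or.inr ⟨vc l', (move_mem hj1).mpr (Or.inr ⟨hl', by simp⟩), by simp [hlj]⟩

/-- move `a_2` down to a free c-vertex -/
lemma dom_a2_to_c (hdom : Dominates (graphD m n) S) {lf : Fin n} (ha2 : va 1 ∈ S)
    (hcov : va 0 ∈ S ∨ ∃ t, vb t 0 ∈ S) :
    Dominates (graphD m n) (insert (vc lf) (S.erase (va 1))) := by
  intro w
  rcases w with x | ⟨i', k'⟩ | j'
  · rcases fin2 x with rfl | rfl
    · rcases hcov with h | ⟨t, h⟩
      · exact Or.inl ((move_mem ha2).mpr (Or.inr ⟨h, by simp⟩))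
      · exact Or.inr ⟨vb t 0, (move_mem ha2).mpr (Or.inr ⟨h, by simp⟩), by simp⟩
    · exact Or.inr ⟨vc lf, (move_mem ha2).mpr (Or.inl rfl), by simp⟩
  · rcases fin2 k' with rfl | rfl
    · rcases pair_mem hdom i' with h | h
      · exact Or.inl ((move_mem ha2).mpr (Or.inr ⟨h, by simp⟩))
      · exact Or.inr ⟨vb i' 1, (move_mem ha2).mpr (Or.inr ⟨h, by simp⟩), by simp⟩
    · rcases pair_mem hdom i' with h | h
      · exact Or.inr ⟨vb i' 0, (move_mem ha2).mpr (Or.inr ⟨h, by simp⟩), by simp⟩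
      · exact Or.inl ((move_mem ha2).mpr (Or.inr ⟨h, by simp⟩))
  · by_cases hlj : lf = j'
    · exact Or.inl ((move_mem ha2).mpr (Or.inl (by rw [hlj])))
    · exact Or.inr ⟨vc lf, (move_mem ha2).mpr (Or.inl rfl), by simp [hlj]⟩

/-- move a `b_1`-guard down onto its free partner -/
lemma dom_b1_down (hdom : Dominates (graphD m n) S) {j1 : Fin m} (hj10 : vb j1 0 ∈ S)
    (hother : ∃ t, t ≠ j1 ∧ vb t 0 ∈ S) (hc : ∃ l', vc l' ∈ S) :
    Dominates (graphD m n) (insert (vb j1 1) (S.erase (vb j1 0))) := by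
  obtain ⟨t, htj, ht⟩ := hother
  obtain ⟨l', hl'⟩ := hc
  intro w
  rcases w with x | ⟨i', k'⟩ | j'
  · rcases fin2 x with rfl | rfl
    · exact Or.inr ⟨vb t 0, (move_mem hj10).mpr (Or.inr ⟨ht, by simp [htj]⟩), by simp⟩
    · exact Or.inr ⟨vb t 0, (move_mem hj10).mpr (Or.inr ⟨ht, by simp [htj]⟩), by simp⟩
  · by_cases hii : i' = j1
    · subst hii
      rcases fin2 k' with rfl | rfl
      · exact Or.inr ⟨vb i' 1, (move_mem hj10).mpr (Or.inl rfl), by simp⟩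
      · exact Or.inl ((move_mem hj10).mpr (Or.inl rfl))
    · rcases fin2 k' with rfl | rfl
      · rcases pair_mem hdom i' with h | h
        · exact Or.inl ((move_mem hj10).mpr (Or.inr ⟨h, by simp [hii]⟩))
        · exact Or.inr ⟨vb i' 1, (move_mem hj10).mpr (Or.inr ⟨h, by simp⟩), by simp⟩
      · rcases pair_mem hdom i' with h | h
        · exact Or.inr ⟨vb i' 0, (move_mem hj10).mpr (Or.inr ⟨h, by simp [hii]⟩), by simp⟩
        · exact Or.inl ((move_mem hj10).mpr (Or.inr ⟨h, by simp⟩))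
  · by_cases hlj : l' = j'
    · exact Or.inl ((move_mem hj10).mpr (Or.inr ⟨hlj ▸ hl', by simp⟩))
    · exact Or.inr ⟨vc l', (move_mem hj10).mpr (Or.inr ⟨hl', by simp⟩), by simp [hlj]⟩

/-- move `a_1` onto a free `b_j^1` -/
lemma dom_a1_to_b1 (hdom : Dominates (graphD m n) S) {j : Fin m} (ha1 : va 0 ∈ S) :
    Dominates (graphD m n) (insert (vb j 0) (S.erase (va 0))) := by
  intro w
  rcases w with x | ⟨i', k'⟩ | j'
  · rcases fin2 x with rfl | rfl
    · exact Or.inr ⟨vb j 0, (move_mem ha1).mpr (Or.inl rfl), by simp⟩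
    · exact Or.inr ⟨vb j 0, (move_mem ha1).mpr (Or.inl rfl), by simp⟩
  · rcases fin2 k' with rfl | rfl
    · by_cases hii : i' = j
      · exact Or.inl ((move_mem ha1).mpr (Or.inl (by rw [hii])))
      · exact Or.inr ⟨vb j 0, (move_mem ha1).mpr (Or.inl rfl), by simp [Ne.symm hii]⟩
    · rcases pair_mem hdom i' with h | h
      · exact Or.inr ⟨vb i' 0, (move_mem ha1).mpr (Or.inr ⟨h, by simp⟩), by simp⟩
      · exact Or.inl ((move_mem ha1).mpr (Or.inr ⟨h, by simp⟩))
  · rcases c_mem hdom j' with h | ⟨l, h⟩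
    · exact Or.inr ⟨va 1, (move_mem ha1).mpr (Or.inr ⟨h, by simp⟩), by simp⟩
    · by_cases hlj : l = j'
      · exact Or.inl ((move_mem ha1).mpr (Or.inr ⟨hlj ▸ h, by simp⟩))
      · exact Or.inr ⟨vc l, (move_mem ha1).mpr (Or.inr ⟨h, by simp⟩), by simp [hlj]⟩

/-- move `a_1` to `a_2` when all of `B_1` is occupied -/
lemma dom_a1_to_a2 (ha1 : va 0 ∈ S) (hall : ∀ i, vb i 0 ∈ S) :
    Dominates (graphD m n) (insert (va 1) (S.erase (va 0))) := by
  intro w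
  rcases w with x | ⟨i', k'⟩ | j'
  · rcases fin2 x with rfl | rfl
    · exact Or.inr ⟨va 1, (move_mem ha1).mpr (Or.inl rfl), by simp⟩
    · exact Or.inl ((move_mem ha1).mpr (Or.inl rfl))
  · rcases fin2 k' with rfl | rfl
    · exact Or.inl ((move_mem ha1).mpr (Or.inr ⟨hall i', by simp⟩))
    · exact Or.inr ⟨vb i' 0, (move_mem ha1).mpr (Or.inr ⟨hall i', by simp⟩), by simp⟩
  · exact Or.inr ⟨va 1, (move_mem ha1).mpr (Or.inl rfl), by simp⟩

/-- move `a_2` onto a free `b_j^1` when no `b^1` is occupied -/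
lemma dom_a2_to_b1 (hdom : Dominates (graphD m n) S) {j : Fin m} (ha2 : va 1 ∈ S)
    (hB1 : ∀ t, vb t 0 ∉ S) (hc : ∃ l', vc l' ∈ S) :
    Dominates (graphD m n) (insert (vb j 0) (S.erase (va 1))) := by
  obtain ⟨l', hl'⟩ := hc
  intro w
  rcases w with x | ⟨i', k'⟩ | j'
  · rcases fin2 x with rfl | rfl
    · exact Or.inr ⟨vb j 0, (move_mem ha2).mpr (Or.inl rfl), by simp⟩
    · exact Or.inr ⟨vb j 0, (move_mem ha2).mpr (Or.inl rfl), by simp⟩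
  · rcases fin2 k' with rfl | rfl
    · by_cases hii : i' = j
      · exact Or.inl ((move_mem ha2).mpr (Or.inl (by rw [hii])))
      · exact Or.inr ⟨vb j 0, (move_mem ha2).mpr (Or.inl rfl), by simp [Ne.symm hii]⟩
    · have h : vb i' 1 ∈ S := (pair_mem hdom i').resolve_left (hB1 i')
      exact Or.inl ((move_mem ha2).mpr (Or.inr ⟨h, by simp⟩))
  · by_cases hlj : l' = j'
    · exact Or.inl ((move_mem ha2).mpr (Or.inr ⟨hlj ▸ hl', by simp⟩))
    · exact Or.inr ⟨vc l', (move_mem ha2).mpr (Or.inr ⟨hl', by simp⟩), by simp [hlj]⟩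


/-! ### autonomous domination, lower bound: reachability and the kill -/

def StepD (m n : ℕ) (S S' : Finset (Fin 2 ⊕ (Fin m × Fin 2) ⊕ Fin n)) : Prop :=
  Dominates (graphD m n) S' ∧ AdjacentSets (graphD m n) S S'

def Kill (S : Finset (Fin 2 ⊕ (Fin m × Fin 2) ⊕ Fin n)) : Prop :=
  (∃ j, vb j 0 ∈ S ∧ vb j 1 ∉ S ∧ va 0 ∉ S ∧ va 1 ∉ S ∧ ∀ j', vb j' 0 ∈ S → j' = j) ∨
  (va 1 ∈ S ∧ va 0 ∉ S ∧ (∀ j', vb j' 0 ∉ S) ∧ ∀ l, vc l ∉ S)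

lemma rtg_mem {F : Set (Finset (Fin 2 ⊕ (Fin m × Fin 2) ⊕ Fin n))}
    (hF : AutFamily (graphD m n) F) {S S'} (hS : S ∈ F)
    (h : Relation.ReflTransGen (StepD m n) S S') : S' ∈ F := by
  induction h with
  | refl => exact hS
  | tail h1 h2 ih => exact hF.2.2 _ ih _ h2.1 h2.2

lemma rtg_card {S S' : Finset (Fin 2 ⊕ (Fin m × Fin 2) ⊕ Fin n)}
    (h : Relation.ReflTransGen (StepD m n) S S') : S'.card = S.card := by
  induction h with
  | refl => rfl
  | tail h1 h2 ih => rw [adjacentSets_card h2.2, ih]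

lemma kill_false (hn : 0 < n) {F : Set (Finset (Fin 2 ⊕ (Fin m × Fin 2) ⊕ Fin n))}
    (hF : AutFamily (graphD m n) F) {S} (hS : S ∈ F) (hk : Kill S) : False := by
  rcases hk with ⟨j, h1, h2, h3, h4, h5⟩ | ⟨h1, h2, h3, h4⟩
  · -- type 1: attack b_j^2
    obtain ⟨S', hS'F, hAdj, hvS'⟩ := hF.2.1 S hS (vb j 1) h2
    obtain ⟨u, huS, hadj, rfl⟩ := response_eq hAdj h2 hvS'
    have hu : u = vb j 0 := adj_to_b2 hadj
    subst hu
    rcases hF.1 _ hS'F (va 0) with hmem | ⟨w, hw, hadjw⟩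
    · rcases (move_mem huS).mp hmem with h | ⟨h, -⟩
      · simp at h
      · exact h3 h
    · rcases adj_to_a1 hadjw with rfl | ⟨j', rfl⟩
      · rcases (move_mem huS).mp hw with h | ⟨h, -⟩
        · simp at h
        · exact h4 h
      · rcases (move_mem huS).mp hw with h | ⟨h, hne⟩
        · simp at h
        · exact hne (by rw [h5 j' h])
  · -- type 2: attack a_1
    obtain ⟨S', hS'F, hAdj, hvS'⟩ := hF.2.1 S hS (va 0) h2
    obtain ⟨u, huS, hadj, rfl⟩ := response_eq hAdj h2 hvS'
    have hu : u = va 1 := by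
      rcases adj_to_a1 hadj with rfl | ⟨j', rfl⟩
      · rfl
      · exact absurd huS (h3 j')
    subst hu
    rcases hF.1 _ hS'F (vc ⟨0, hn⟩) with hmem | ⟨w, hw, hadjw⟩
    · rcases (move_mem huS).mp hmem with h | ⟨h, -⟩
      · simp at h
      · exact h4 _ h
    · rcases adj_to_c hadjw with rfl | ⟨l, -, rfl⟩
      · rcases (move_mem huS).mp hw with h | ⟨-, hne⟩
        · simp at h
        · exact hne rfl
      · rcases (move_mem huS).mp hw with h | ⟨h, -⟩
        · simp at h
        · exact h4 _ h


lemma phase2 (hn : 0 < n) :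
    ∀ N (S : Finset (Fin 2 ⊕ (Fin m × Fin 2) ⊕ Fin n)), Dominates (graphD m n) S →
    S.card ≤ m + n → va 0 ∉ S → va 1 ∉ S →
    (Finset.univ.filter (fun j : Fin m => vb j 0 ∈ S)).card = N →
    ∃ S', Relation.ReflTransGen (StepD m n) S S' ∧ Kill S' := by
  intro N
  induction N using Nat.strong_induction_on with
  | _ N IH =>
  intro S hdom hcard ha1 ha2 hN
  obtain ⟨j, hj⟩ : ∃ j, vb j 0 ∈ S := by
    rcases a1_mem hdom with h | h | h
    · exact absurd h ha1
    · exact absurd h ha2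
    · exact h
  have hC : ∃ l, vc l ∈ S := by
    rcases c_mem hdom ⟨0, hn⟩ with h | h
    · exact absurd h ha2
    · exact h
  have hNpos : 0 < N := by
    rw [← hN]
    exact Finset.card_pos.mpr ⟨j, by simp [hj]⟩
  by_cases hN1 : N = 1
  · -- a unique occupied b^1
    have huniq : ∀ j', vb j' 0 ∈ S → j' = j := by
      intro j' h'
      by_contra hne
      have h2 : 1 < (Finset.univ.filter (fun jj : Fin m => vb jj 0 ∈ S)).card :=
        Finset.one_lt_card.mpr ⟨j', by simp [h'], j, by simp [hj], hne⟩
      omega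
    by_cases hj1 : vb j 1 ∈ S
    · -- doubled: three moves to the kill configuration
      set S1 := insert (va 1) (S.erase (vb j 0)) with hS1
      have hd1 : Dominates (graphD m n) S1 := dom_b1_to_a2 hdom hj1 hj hC
      have step1 : StepD m n S S1 := ⟨hd1, ⟨vb j 0, va 1, hj, ha2, by simp, rfl⟩⟩
      have ha2S1 : va 1 ∈ S1 := (move_mem hj).mpr (Or.inl rfl)
      have hj1S1 : vb j 1 ∈ S1 := (move_mem hj).mpr (Or.inr ⟨hj1, by simp⟩)
      have hC1 : ∃ l, vc l ∈ S1 := by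
        obtain ⟨l, hl⟩ := hC
        exact ⟨l, (move_mem hj).mpr (Or.inr ⟨hl, by simp⟩)⟩
      have hj0S1 : vb j 0 ∉ S1 := by
        intro hcon
        rcases (move_mem hj).mp hcon with h | ⟨-, h⟩
        · simp at h
        · exact h rfl
      set S2 := insert (vb j 0) (S1.erase (vb j 1)) with hS2
      have hd2 : Dominates (graphD m n) S2 := dom_b2_to_b1 hd1 hj1S1 ha2S1 hC1
      have step2 : StepD m n S1 S2 := ⟨hd2, ⟨vb j 1, vb j 0, hj1S1, hj0S1, by simp, rfl⟩⟩
      have ha2S2 : va 1 ∈ S2 := (move_mem hj1S1).mpr (Or.inr ⟨ha2S1, by simp⟩)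
      have hj0S2 : vb j 0 ∈ S2 := (move_mem hj1S1).mpr (Or.inl rfl)
      have hcard1 : S1.card = S.card := move_card hj ha2
      have hcard2 : S2.card = S.card := by rw [move_card hj1S1 hj0S1, hcard1]
      obtain ⟨lf, hlf⟩ := exists_free_c hd2 (by omega) ha2S2
      set S3 := insert (vc lf) (S2.erase (va 1)) with hS3
      have hd3 : Dominates (graphD m n) S3 := dom_a2_to_c hd2 ha2S2 (Or.inr ⟨j, hj0S2⟩)
      have step3 : StepD m n S2 S3 := ⟨hd3, ⟨va 1, vc lf, ha2S2, hlf, by simp, rfl⟩⟩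
      refine ⟨S3, Relation.ReflTransGen.tail
        (Relation.ReflTransGen.tail (Relation.ReflTransGen.single step1) step2) step3,
        Or.inl ⟨j, ?_, ?_, ?_, ?_, ?_⟩⟩
      · exact (move_mem ha2S2).mpr (Or.inr ⟨hj0S2, by simp⟩)
      · intro hcon
        rcases (move_mem ha2S2).mp hcon with h | ⟨h, -⟩
        · simp at h
        · rcases (move_mem hj1S1).mp h with h' | ⟨-, h'⟩
          · simp at h'
          · exact h' rfl
      · intro hcon
        rcases (move_mem ha2S2).mp hcon with h | ⟨h, -⟩
        · simp at h
        · rcases (move_mem hj1S1).mp h with h' | ⟨h', -⟩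
          · simp at h'
          · rcases (move_mem hj).mp h' with h'' | ⟨h'', -⟩
            · simp at h''
            · exact ha1 h''
      · intro hcon
        rcases (move_mem ha2S2).mp hcon with h | ⟨-, h⟩
        · simp at h
        · exact h rfl
      · intro j' hcon
        rcases (move_mem ha2S2).mp hcon with h | ⟨h, -⟩
        · simp at h
        · rcases (move_mem hj1S1).mp h with h' | ⟨h', -⟩
          · exact ((by simpa using h' : j' = j ∧ (0:Fin 2) = 0)).1
          · rcases (move_mem hj).mp h' with h'' | ⟨h'', -⟩
            · simp at h''
            · exact huniq j' h''
    · exact ⟨S, Relation.ReflTransGen.refl, Or.inl ⟨j, hj, hj1, ha1, ha2, huniq⟩⟩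
  · -- at least two occupied b^1 vertices
    have hlt : 1 < (Finset.univ.filter (fun jj : Fin m => vb jj 0 ∈ S)).card := by omega
    obtain ⟨t1, ht1, t2, ht2, hne⟩ := Finset.one_lt_card.mp hlt
    rw [Finset.mem_filter] at ht1 ht2
    have ht1' : vb t1 0 ∈ S := ht1.2
    have ht2' : vb t2 0 ∈ S := ht2.2
    by_cases hdbl : ∃ l, vb l 0 ∈ S ∧ vb l 1 ∈ S
    · -- a doubled pair exists: two moves reduce the b^1-count
      obtain ⟨l, hl0, hl1⟩ := hdbl
      obtain ⟨t, htl, ht⟩ : ∃ t, t ≠ l ∧ vb t 0 ∈ S := by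
        by_cases h1 : t1 = l
        · exact ⟨t2, fun h => hne (by rw [h1, h]), ht2'⟩
        · exact ⟨t1, h1, ht1'⟩
      set S1 := insert (va 1) (S.erase (vb l 0)) with hS1
      have hd1 : Dominates (graphD m n) S1 := dom_b1_to_a2 hdom hl1 hl0 hC
      have step1 : StepD m n S S1 := ⟨hd1, ⟨vb l 0, va 1, hl0, ha2, by simp, rfl⟩⟩
      have ha2S1 : va 1 ∈ S1 := (move_mem hl0).mpr (Or.inl rfl)
      have hcard1 : S1.card = S.card := move_card hl0 ha2
      obtain ⟨lf, hlf⟩ := exists_free_c hd1 (by omega) ha2S1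
      set S2 := insert (vc lf) (S1.erase (va 1)) with hS2
      have hd2 : Dominates (graphD m n) S2 := dom_a2_to_c hd1 ha2S1
        (Or.inr ⟨t, (move_mem hl0).mpr (Or.inr ⟨ht, by simp [htl]⟩)⟩)
      have step2 : StepD m n S1 S2 := ⟨hd2, ⟨va 1, vc lf, ha2S1, hlf, by simp, rfl⟩⟩
      have hcard2 : S2.card = S.card := by rw [move_card ha2S1 hlf, hcard1]
      have hmem2 : ∀ jj : Fin m, vb jj 0 ∈ S2 ↔ (jj ≠ l ∧ vb jj 0 ∈ S) := by
        intro jj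
        constructor
        · intro h
          rcases (move_mem ha2S1).mp h with h' | ⟨h', -⟩
          · simp at h'
          · rcases (move_mem hl0).mp h' with h'' | ⟨h'', hne'⟩
            · simp at h''
            · exact ⟨fun e => hne' (by rw [e]), h''⟩
        · rintro ⟨hnel, hmem⟩
          exact (move_mem ha2S1).mpr (Or.inr ⟨(move_mem hl0).mpr
            (Or.inr ⟨hmem, by simp [hnel]⟩), by simp⟩)
      have hfe : Finset.univ.filter (fun jj : Fin m => vb jj 0 ∈ S2) =
          (Finset.univ.filter (fun jj : Fin m => vb jj 0 ∈ S)).erase l := by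
        ext jj
        simp only [Finset.mem_filter, Finset.mem_univ, true_and, Finset.mem_erase]
        exact hmem2 jj
      have ha1S2 : va 0 ∉ S2 := by
        intro hcon
        rcases (move_mem ha2S1).mp hcon with h | ⟨h, -⟩
        · simp at h
        · rcases (move_mem hl0).mp h with h' | ⟨h', -⟩
          · simp at h'
          · exact ha1 h'
      have ha2S2 : va 1 ∉ S2 := by
        intro hcon
        rcases (move_mem ha2S1).mp hcon with h | ⟨-, h⟩
        · simp at h
        · exact h rfl
      obtain ⟨S', hpath, hkill⟩ := IH (N - 1) (by omega) S2 hd2 (by omega) ha1S2 ha2S2 (by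
        rw [hfe, Finset.card_erase_of_mem (by simp [hl0]), hN])
      exact ⟨S', Relation.ReflTransGen.trans
        (Relation.ReflTransGen.tail (Relation.ReflTransGen.single step1) step2) hpath, hkill⟩
    · -- no doubled pair: push one b^1-guard down
      push_neg at hdbl
      set S1 := insert (vb t1 1) (S.erase (vb t1 0)) with hS1
      have hd1 : Dominates (graphD m n) S1 := dom_b1_down hdom ht1' ⟨t2, fun h => hne h.symm, ht2'⟩ hC
      have step1 : StepD m n S S1 := ⟨hd1, ⟨vb t1 0, vb t1 1, ht1', hdbl t1 ht1', by simp, rfl⟩⟩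
      have hcard1 : S1.card = S.card := move_card ht1' (hdbl t1 ht1')
      have hmem1 : ∀ jj : Fin m, vb jj 0 ∈ S1 ↔ (jj ≠ t1 ∧ vb jj 0 ∈ S) := by
        intro jj
        constructor
        · intro h
          rcases (move_mem ht1').mp h with h' | ⟨h', hne'⟩
          · exact absurd ((by simpa using h' : jj = t1 ∧ (0:Fin 2) = 1)).2 (by decide)
          · exact ⟨fun e => hne' (by rw [e]), h'⟩
        · rintro ⟨hnel, hmem⟩
          exact (move_mem ht1').mpr (Or.inr ⟨hmem, by simp [hnel]⟩)
      have hfe : Finset.univ.filter (fun jj : Fin m => vb jj 0 ∈ S1) =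
          (Finset.univ.filter (fun jj : Fin m => vb jj 0 ∈ S)).erase t1 := by
        ext jj
        simp only [Finset.mem_filter, Finset.mem_univ, true_and, Finset.mem_erase]
        exact hmem1 jj
      have ha1S1 : va 0 ∉ S1 := by
        intro hcon
        rcases (move_mem ht1').mp hcon with h | ⟨h, -⟩
        · simp at h
        · exact ha1 h
      have ha2S1 : va 1 ∉ S1 := by
        intro hcon
        rcases (move_mem ht1').mp hcon with h | ⟨h, -⟩
        · simp at h
        · exact ha2 h
      obtain ⟨S', hpath, hkill⟩ := IH (N - 1) (by omega) S1 hd1 (by omega) ha1S1 ha2S1 (by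
        rw [hfe, Finset.card_erase_of_mem (by simp [ht1']), hN])
      exact ⟨S', Relation.ReflTransGen.trans (Relation.ReflTransGen.single step1) hpath, hkill⟩


lemma phase1a (hm : 0 < m) (hdom : Dominates (graphD m n) S) (hcard : S.card ≤ m + n)
    (ha2 : va 1 ∈ S) (ha1 : va 0 ∉ S) :
    ∃ S', Relation.ReflTransGen (StepD m n) S S' ∧
      ((Dominates (graphD m n) S' ∧ S'.card ≤ m + n ∧ va 0 ∉ S' ∧ va 1 ∉ S') ∨ Kill S') := by
  by_cases hB : ∃ t, vb t 0 ∈ S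
  · obtain ⟨lf, hlf⟩ := exists_free_c hdom hcard ha2
    have hd : Dominates (graphD m n) (insert (vc lf) (S.erase (va 1))) :=
      dom_a2_to_c hdom ha2 (Or.inr hB)
    refine ⟨_, Relation.ReflTransGen.single ⟨hd, ⟨va 1, vc lf, ha2, hlf, by simp, rfl⟩⟩,
      Or.inl ⟨hd, by rw [move_card ha2 hlf]; exact hcard, ?_, ?_⟩⟩
    · intro hcon
      rcases (move_mem ha2).mp hcon with h | ⟨h, -⟩
      · simp at h
      · exact ha1 h
    · intro hcon
      rcases (move_mem ha2).mp hcon with h | ⟨-, h⟩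
      · simp at h
      · exact h rfl
  · push_neg at hB
    by_cases hc : ∃ l, vc l ∈ S
    · have hd : Dominates (graphD m n) (insert (vb ⟨0, hm⟩ 0) (S.erase (va 1))) :=
        dom_a2_to_b1 hdom ha2 hB hc
      refine ⟨_, Relation.ReflTransGen.single
        ⟨hd, ⟨va 1, vb ⟨0, hm⟩ 0, ha2, hB _, by simp, rfl⟩⟩, Or.inl ⟨hd,
        by rw [move_card ha2 (hB _)]; exact hcard, ?_, ?_⟩⟩
      · intro hcon
        rcases (move_mem ha2).mp hcon with h | ⟨h, -⟩
        · simp at h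
        · exact ha1 h
      · intro hcon
        rcases (move_mem ha2).mp hcon with h | ⟨-, h⟩
        · simp at h
        · exact h rfl
    · push_neg at hc
      exact ⟨S, Relation.ReflTransGen.refl, Or.inr (Or.inr ⟨ha2, ha1, hB, hc⟩)⟩

lemma phase1 (hm : 0 < m) (hn : 0 < n) (hdom : Dominates (graphD m n) S)
    (hcard : S.card ≤ m + n) :
    ∃ S', Relation.ReflTransGen (StepD m n) S S' ∧
      ((Dominates (graphD m n) S' ∧ S'.card ≤ m + n ∧ va 0 ∉ S' ∧ va 1 ∉ S') ∨ Kill S') := by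
  by_cases ha1 : va 0 ∈ S
  · by_cases hfree : ∃ t, vb t 0 ∉ S
    · obtain ⟨t, ht⟩ := hfree
      have hd1 : Dominates (graphD m n) (insert (vb t 0) (S.erase (va 0))) :=
        dom_a1_to_b1 hdom ha1
      set S1 := insert (vb t 0) (S.erase (va 0)) with hS1
      have step1 : StepD m n S S1 := ⟨hd1, ⟨va 0, vb t 0, ha1, ht, by simp, rfl⟩⟩
      have hcard1 : S1.card ≤ m + n := by rw [move_card ha1 ht]; exact hcard
      have ha1S1 : va 0 ∉ S1 := by
        intro hcon
        rcases (move_mem ha1).mp hcon with h | ⟨-, h⟩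
        · simp at h
        · exact h rfl
      by_cases ha2 : va 1 ∈ S
      · have ha2S1 : va 1 ∈ S1 := (move_mem ha1).mpr (Or.inr ⟨ha2, by simp⟩)
        obtain ⟨S', hpath, hres⟩ := phase1a hm hd1 hcard1 ha2S1 ha1S1
        exact ⟨S', Relation.ReflTransGen.trans (Relation.ReflTransGen.single step1) hpath, hres⟩
      · have ha2S1 : va 1 ∉ S1 := by
          intro hcon
          rcases (move_mem ha1).mp hcon with h | ⟨h, -⟩
          · simp at h
          · exact ha2 h
        exact ⟨S1, Relation.ReflTransGen.single step1, Or.inl ⟨hd1, hcard1, ha1S1, ha2S1⟩⟩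
    · push_neg at hfree
      by_cases ha2 : va 1 ∈ S
      · -- both a-guards present and B1 full: move a2 down to C first
        obtain ⟨lf, hlf⟩ := exists_free_c hdom hcard ha2
        set S1 := insert (vc lf) (S.erase (va 1)) with hS1
        have hd1 : Dominates (graphD m n) S1 := dom_a2_to_c hdom ha2 (Or.inl ha1)
        have step1 : StepD m n S S1 := ⟨hd1, ⟨va 1, vc lf, ha2, hlf, by simp, rfl⟩⟩
        have hcard1 : S1.card ≤ m + n := by rw [move_card ha2 hlf]; exact hcard
        have ha1S1 : va 0 ∈ S1 := (move_mem ha2).mpr (Or.inr ⟨ha1, by simp⟩)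
        have ha2S1 : va 1 ∉ S1 := by
          intro hcon
          rcases (move_mem ha2).mp hcon with h | ⟨-, h⟩
          · simp at h
          · exact h rfl
        have hallS1 : ∀ i, vb i 0 ∈ S1 :=
          fun i => (move_mem ha2).mpr (Or.inr ⟨hfree i, by simp⟩)
        set S2 := insert (va 1) (S1.erase (va 0)) with hS2
        have hd2 : Dominates (graphD m n) S2 := dom_a1_to_a2 ha1S1 hallS1
        have step2 : StepD m n S1 S2 := ⟨hd2, ⟨va 0, va 1, ha1S1, ha2S1, by simp, rfl⟩⟩
        have hcard2 : S2.card ≤ m + n := by rw [move_card ha1S1 ha2S1]; exact hcard1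
        have ha2S2 : va 1 ∈ S2 := (move_mem ha1S1).mpr (Or.inl rfl)
        have ha1S2 : va 0 ∉ S2 := by
          intro hcon
          rcases (move_mem ha1S1).mp hcon with h | ⟨-, h⟩
          · simp at h
          · exact h rfl
        obtain ⟨S', hpath, hres⟩ := phase1a hm hd2 hcard2 ha2S2 ha1S2
        exact ⟨S', Relation.ReflTransGen.trans
          (Relation.ReflTransGen.tail (Relation.ReflTransGen.single step1) step2) hpath, hres⟩
      · set S1 := insert (va 1) (S.erase (va 0)) with hS1
        have hd1 : Dominates (graphD m n) S1 := dom_a1_to_a2 ha1 hfree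
        have step1 : StepD m n S S1 := ⟨hd1, ⟨va 0, va 1, ha1, ha2, by simp, rfl⟩⟩
        have hcard1 : S1.card ≤ m + n := by rw [move_card ha1 ha2]; exact hcard
        have ha2S1 : va 1 ∈ S1 := (move_mem ha1).mpr (Or.inl rfl)
        have ha1S1 : va 0 ∉ S1 := by
          intro hcon
          rcases (move_mem ha1).mp hcon with h | ⟨-, h⟩
          · simp at h
          · exact h rfl
        obtain ⟨S', hpath, hres⟩ := phase1a hm hd1 hcard1 ha2S1 ha1S1
        exact ⟨S', Relation.ReflTransGen.trans (Relation.ReflTransGen.single step1) hpath, hres⟩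
  · by_cases ha2 : va 1 ∈ S
    · exact phase1a hm hdom hcard ha2 ha1
    · exact ⟨S, Relation.ReflTransGen.refl, Or.inl ⟨hdom, hcard, ha1, ha2⟩⟩

lemma aut_lower (hm : 0 < m) (hn : 0 < n)
    {F : Set (Finset (Fin 2 ⊕ (Fin m × Fin 2) ⊕ Fin n))} {T : Finset _}
    (hFam : AutFamily (graphD m n) F) (hT : T ∈ F) : m + n + 1 ≤ T.card := by
  by_contra hcon
  push_neg at hcon
  have hcard : T.card ≤ m + n := by omega
  have hdom := hFam.1 T hT
  obtain ⟨S1, hpath1, hres⟩ := phase1 hm hn hdom hcard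
  rcases hres with ⟨hd1, hc1, ha1, ha2⟩ | hkill
  · obtain ⟨S', hpath2, hkill⟩ := phase2 hn _ S1 hd1 hc1 ha1 ha2 rfl
    exact kill_false hn hFam (rtg_mem hFam hT (Relation.ReflTransGen.trans hpath1 hpath2)) hkill
  · exact kill_false hn hFam (rtg_mem hFam hT hpath1) hkill


/-! ### the autonomous family and witness -/

def SA (m n : ℕ) : Finset (Fin 2 ⊕ (Fin m × Fin 2) ⊕ Fin n) :=
  insert (va 1) ((Finset.univ.image (fun i => vb i 0)) ∪ (Finset.univ.image vc))

lemma SA_mem {x} : x ∈ SA m n ↔ x = va 1 ∨ (∃ i, x = vb i 0) ∨ ∃ l, x = vc l := by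
  simp [SA, eq_comm]

lemma SA_dom : Dominates (graphD m n) (SA m n) := by
  intro v
  rcases v with x | ⟨i, k⟩ | j
  · rcases fin2 x with rfl | rfl
    · exact Or.inr ⟨va 1, SA_mem.mpr (Or.inl rfl), by simp⟩
    · exact Or.inl (SA_mem.mpr (Or.inl rfl))
  · rcases fin2 k with rfl | rfl
    · exact Or.inl (SA_mem.mpr (Or.inr (Or.inl ⟨i, rfl⟩)))
    · exact Or.inr ⟨vb i 0, SA_mem.mpr (Or.inr (Or.inl ⟨i, rfl⟩)), by simp⟩
  · exact Or.inl (SA_mem.mpr (Or.inr (Or.inr ⟨j, rfl⟩)))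

lemma SA_card : (SA m n).card = m + n + 1 := by
  rw [SA, Finset.card_insert_of_notMem (by simp),
    Finset.card_union_of_disjoint (by
      rw [Finset.disjoint_left]
      rintro x hx hy
      obtain ⟨i, -, rfl⟩ := Finset.mem_image.mp hx
      obtain ⟨l, -, h⟩ := Finset.mem_image.mp hy
      exact absurd h (by simp)),
    Finset.card_image_of_injective _ (fun a b h => by simpa using h),
    Finset.card_image_of_injective _ (fun a b h => by simpa using h)]
  simp

def AF (m n : ℕ) : Set (Finset (Fin 2 ⊕ (Fin m × Fin 2) ⊕ Fin n)) :=
  {S | Dominates (graphD m n) S ∧ S.card = m + n + 1}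

lemma AF_fam (hn : 0 < n) : AutFamily (graphD m n) (AF m n) := by
  refine ⟨fun S h => h.1, ?_, ?_⟩
  · rintro S ⟨hdom, hcard⟩ v hv
    rcases v with x | ⟨i, k⟩ | j
    · rcases fin2 x with rfl | rfl
      · obtain ⟨S', hp, hadj, hm⟩ := autdef_a1 hdom hcard hv
        exact ⟨S', hp, hadj, hm⟩
      · obtain ⟨S', hp, hadj, hm⟩ := autdef_a2 hn hdom hcard hv
        exact ⟨S', hp, hadj, hm⟩
    · rcases fin2 k with rfl | rfl
      · obtain ⟨S', hp, hadj, hm⟩ := autdef_b1 hdom hcard hv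
        exact ⟨S', hp, hadj, hm⟩
      · obtain ⟨S', hp, hadj, hm⟩ := autdef_b2 hdom hcard hv
        exact ⟨S', hp, hadj, hm⟩
    · obtain ⟨S', hp, hadj, hm⟩ := autdef_c hn hdom hcard hv
      exact ⟨S', hp, hadj, hm⟩
  · rintro S ⟨hdom, hcard⟩ S' hdom' hadj
    exact ⟨hdom', by rw [adjacentSets_card hadj]; exact hcard⟩

/-! ### the main theorem components -/

lemma domNum_eq (hm : 0 < m) (hn : 0 < n) : domNum (graphD m n) = m + 1 := by
  have hmem : m + 1 ∈ {k | ∃ S : Finset (Fin 2 ⊕ (Fin m × Fin 2) ⊕ Fin n),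
      Dominates (graphD m n) S ∧ S.card = k} := ⟨S0 m n, S0_dom, S0_card⟩
  apply le_antisymm (Nat.sInf_le hmem)
  apply le_csInf ⟨_, hmem⟩
  rintro k ⟨S, hS, rfl⟩
  exact dom_lower hn hS

def EFAM (m n : ℕ) : Set (Finset (Fin 2 ⊕ (Fin m × Fin 2) ⊕ Fin n)) :=
  {S | ∃ f y z, ECfg f y z S}

lemma eternal_eq (hm : 0 < m) (hn : 0 < n) : eternalDomNum (graphD m n) = m + 2 := by
  have hwit : ∃ (F : Set (Finset (Fin 2 ⊕ (Fin m × Fin 2) ⊕ Fin n)))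
      (S : Finset (Fin 2 ⊕ (Fin m × Fin 2) ⊕ Fin n)),
      EternalFamily (graphD m n) F ∧ S ∈ F ∧ S.card = m + 2 := by
    refine ⟨EFAM m n, SE m n hn, ⟨?_, ?_⟩, ?_, SE_card hn⟩
    · rintro S ⟨f, y, z, h⟩
      exact ecfg_dom h
    · rintro S ⟨f, y, z, h⟩ v hv
      exact ecfg_defense h v hv
    · exact ⟨_, _, _, SE_cfg hn⟩
  have hmem : m + 2 ∈ {k | ∃ (F : Set (Finset (Fin 2 ⊕ (Fin m × Fin 2) ⊕ Fin n)))
      (S : Finset (Fin 2 ⊕ (Fin m × Fin 2) ⊕ Fin n)),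
      EternalFamily (graphD m n) F ∧ S ∈ F ∧ S.card = k} := hwit
  apply le_antisymm (Nat.sInf_le hmem)
  apply le_csInf ⟨_, hmem⟩
  · skip
    rintro k ⟨F, S, hFam, hSF, rfl⟩
    have h1 : m + 1 ≤ S.card := dom_lower hn (hFam.1 S hSF)
    rcases eq_or_lt_of_le h1 with heq | hlt
    · exfalso
      obtain ⟨f, z, hchar, hz⟩ := small_structure hn (hFam.1 S hSF) heq.symm
      exact eternal_aux hn hFam _ S f z hSF hchar hz rfl
    · omega

lemma aut_eq (hm : 0 < m) (hn : 0 < n) : autDomNum (graphD m n) = m + n + 1 := by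
  have hmem : m + n + 1 ∈ {k | ∃ S : Finset (Fin 2 ⊕ (Fin m × Fin 2) ⊕ Fin n),
      AutDomSet (graphD m n) S ∧ S.card = k} :=
    ⟨SA m n, ⟨AF m n, AF_fam hn, ⟨SA_dom, SA_card⟩⟩, SA_card⟩
  apply le_antisymm (Nat.sInf_le hmem)
  apply le_csInf ⟨_, hmem⟩
  rintro k ⟨S, ⟨F, hFam, hSF⟩, rfl⟩
  exact aut_lower hm hn hFam hSF

end GD

/-- for `m, n ≥ 1`, `γ(D_{m,n}) = m + 1`, `γ_∞(D_{m,n}) = m + 2` and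
`γ_aut(D_{m,n}) = m + n + 1`. -/
theorem graphD_parameters (m n : ℕ) (hm : 1 ≤ m) (hn : 1 ≤ n) :
    domNum (graphD m n) = m + 1 ∧ eternalDomNum (graphD m n) = m + 2 ∧
    autDomNum (graphD m n) = m + n + 1 :=
  ⟨GD.domNum_eq hm hn, GD.eternal_eq hm hn, GD.aut_eq hm hn⟩
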